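/- Let L be convex and twice differentiable with v^⊤∇²L(w)v ≤ B² L(w)‖v‖² for all w, v. For the steepest descent step w_{t+1} = w_t + η_t Δw_t with ⟨Δw_t, -∇L(w_t)⟩ = ‖Δw_t‖² = ‖∇L(w_t)‖_*² and step size η_t = c_t/(B² L(w_t)) with 0 < c_t ≤ √2, one has L(w_{t+1}) ≤ L(w_t). -/

import Mathlib

open Filter Topology Finset
open scoped RealInnerProductSpace BigOperators

noncomputable section

abbrev Euc (d : ℕ) := EuclideanSpace ℝ (Fin d)

/-- `N` is a norm on `ℝ^d`. -/
def IsNorm {d : ℕ} (N : Euc d → ℝ) : Prop :=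
  (∀ v, N v = 0 ↔ v = 0) ∧ (∀ (c : ℝ) (v), N (c • v) = |c| * N v) ∧
  (∀ v w, N (v + w) ≤ N v + N w)

/-- Dual norm `‖y‖_* = sup_{‖v‖ ≤ 1} ⟨y, v⟩`. -/
def dualNorm {d : ℕ} (N : Euc d → ℝ) (y : Euc d) : ℝ :=
  sSup {s | ∃ v, N v ≤ 1 ∧ s = ⟪y, v⟫}

/-- Exponential-loss empirical objective `L(w) = ∑ n exp(-⟨w, x_n⟩)`. -/
def expLoss {d N : ℕ} (x : Fin N → Euc d) (u : Euc d) : ℝ :=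
  ∑ n, Real.exp (-⟪u, x n⟫)

/-- Negative gradient of the exponential loss: `-∇L(w) = ∑ n exp(-⟨w,x_n⟩) x_n`. -/
def negGrad {d N : ℕ} (x : Fin N → Euc d) (u : Euc d) : Euc d :=
  ∑ n, Real.exp (-⟪u, x n⟫) • x n
set_option maxHeartbeats 1000000 in
/-- one step of steepest descent with `η = c/(B² L(w))`, `0 < c ≤ √2`, on a
convex twice-differentiable `L` whose Hessian quadratic form satisfies
`v⊤∇²L(w)v ≤ B² L(w) ‖v‖²`, does not increase the loss. -/
theorem steepest_descent_step_decreases {d : ℕ} (Nrm : Euc d → ℝ) (hNrm : IsNorm Nrm)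
    (L : Euc d → ℝ) (hconv : ConvexOn ℝ Set.univ L) (hsmooth : ContDiff ℝ 2 L)
    (B : ℝ) (hB : 0 < B)
    (hhess : ∀ u v : Euc d, iteratedFDeriv ℝ 2 L u ![v, v] ≤ B ^ 2 * L u * (Nrm v) ^ 2)
    (w Δ : Euc d) (hLpos : 0 < L w) (c η : ℝ) (hc : 0 < c) (hc2 : c ≤ Real.sqrt 2)
    (hη : η = c / (B ^ 2 * L w))
    (hd1 : ⟪Δ, -gradient L w⟫ = (Nrm Δ) ^ 2)
    (hd2 : (Nrm Δ) ^ 2 = (dualNorm Nrm (gradient L w)) ^ 2) :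
    L (w + η • Δ) ≤ L w := by
  obtain ⟨hN0, hNsmul, hNadd⟩ := hNrm
  have hNnonneg : ∀ u, 0 ≤ Nrm u := by
    intro u
    have h0 : Nrm (0 : Euc d) = 0 := (hN0 0).mpr rfl
    have hneg : Nrm (-u) = Nrm u := by simpa using hNsmul (-1) u
    have hadd := hNadd u (-u)
    simp only [add_neg_cancel, h0, hneg] at hadd
    linarith
  by_cases hΔ : Δ = 0
  · simp [hΔ]
  set a := Nrm Δ ^ 2 with ha
  have haposN : 0 < Nrm Δ :=
    lt_of_le_of_ne (hNnonneg Δ) (fun h => hΔ ((hN0 Δ).mp h.symm))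
  have hapos : 0 < a := by positivity
  have hLB : (0:ℝ) < B ^ 2 * L w := by positivity
  have hηpos : 0 < η := by rw [hη]; positivity
  have hcB : B ^ 2 * L w * η = c := by rw [hη]; field_simp
  set v : Euc d := η • Δ with hv
  set f : ℝ → ℝ := fun t => L (w + t • v) with hf
  set φ : ℝ → ℝ := fun t => fderiv ℝ L (w + t • v) v with hφ
  have hline : ∀ t : ℝ, HasDerivAt (fun t : ℝ => w + t • v) v t := fun t => by
    simpa using ((hasDerivAt_id t).smul_const v).const_add w
  have hf' : ∀ t, HasDerivAt f (φ t) t := fun t =>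
    ((hsmooth.differentiable (by norm_num)).differentiableAt.hasFDerivAt).comp_hasDerivAt t (hline t)
  have hC1 : ContDiff ℝ 1 (fderiv ℝ L) := hsmooth.fderiv_right (by norm_num)
  have hφ' : ∀ t, HasDerivAt φ (iteratedFDeriv ℝ 2 L (w + t • v) ![v, v]) t := fun t => by
    have h1 : HasFDerivAt (fun u => fderiv ℝ L u v)
        ((ContinuousLinearMap.apply ℝ ℝ v).comp (fderiv ℝ (fderiv ℝ L) (w + t • v)))
        (w + t • v) :=
      ((ContinuousLinearMap.apply ℝ ℝ v).hasFDerivAt).comp _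
        ((hC1.differentiable (by norm_num)).differentiableAt.hasFDerivAt)
    have h2 := h1.comp_hasDerivAt t (hline t)
    rw [iteratedFDeriv_two_apply]
    exact h2.congr_deriv (by simp)
  have hgrad : ∀ u, ⟪gradient L w, u⟫ = fderiv ℝ L w u := fun u => by
    rw [gradient, InnerProductSpace.toDual_symm_apply]
  have hinner : ⟪gradient L w, Δ⟫ = -a := by
    rw [inner_neg_right] at hd1
    rw [real_inner_comm]
    linarith [hd1]
  have hφ0 : φ 0 = -(η * a) := by
    have h1 : φ 0 = fderiv ℝ L w (η • Δ) := by simp [hφ, hv]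
    rw [h1, ContinuousLinearMap.map_smul, smul_eq_mul, ← hgrad Δ, hinner]
    ring
  have hf0 : f 0 = L w := by simp [hf]
  have hfconv : ConvexOn ℝ Set.univ f := by
    have h := hconv.comp_affineMap (AffineMap.lineMap w (w + v))
    simp only [Set.preimage_univ] at h
    have he : f = L ∘ (AffineMap.lineMap w (w + v)) := by
      funext t
      simp only [hf, Function.comp_apply, AffineMap.lineMap_apply, vsub_eq_sub, vadd_eq_add]
      congr 1
      module
    rw [he]; exact h
  have hfc : Continuous f :=
    hsmooth.continuous.comp (continuous_const.add (continuous_id.smul continuous_const))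
  set T : Set ℝ := Set.Icc (0:ℝ) 1 ∩ {t | f t ≤ f 0} with hT
  have hTne : T.Nonempty := ⟨0, ⟨le_refl 0, zero_le_one⟩, le_refl (f 0)⟩
  have hTbdd : BddAbove T := ⟨1, fun t ht => ht.1.2⟩
  have hTclosed : IsClosed T := isClosed_Icc.inter (isClosed_le hfc continuous_const)
  set τ := sSup T with hτdef
  have hτT : τ ∈ T := hTclosed.csSup_mem hTne hTbdd
  have hτ1 : τ ≤ 1 := hτT.1.2
  have hτ0 : 0 ≤ τ := hτT.1.1
  have hτeq : τ = 1 := by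
    by_contra hne
    have hτlt : τ < 1 := lt_of_le_of_ne hτ1 hne
    have key : ∃ t, τ < t ∧ t ≤ 1 ∧ f t ≤ f 0 := by
      rcases eq_or_lt_of_le hτ0 with h0 | h0
      · -- τ = 0 : use the negative derivative at 0
        have hneg : φ 0 < 0 := by
          rw [hφ0]
          have : 0 < η * a := by positivity
          linarith
        have hslope := hasDerivAt_iff_tendsto_slope.mp (hf' 0)
        have h1 : ∀ᶠ t in 𝓝[>] (0:ℝ), slope f 0 t < 0 :=
          (hslope.mono_left (nhdsWithin_mono _ (fun x hx => ne_of_gt hx))).eventually_lt_const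
            hneg
        have h2 : Set.Ioc (0:ℝ) 1 ∈ 𝓝[>] (0:ℝ) :=
          Ioc_mem_nhdsGT_of_mem ⟨le_refl 0, zero_lt_one⟩
        obtain ⟨t, hts, htIoc⟩ := (h1.and (eventually_of_mem h2 (fun x hx => hx))).exists
        refine ⟨t, ?_, htIoc.2, ?_⟩
        · rw [← h0]; exact htIoc.1
        · have hsl : slope f 0 t = (f t - f 0) / t := by
            rw [slope_def_field]; ring_nf
          rw [hsl] at hts
          have := (div_neg_iff.mp hts)
          rcases this with ⟨h3, h4⟩ | ⟨h3, h4⟩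
          · linarith [htIoc.1]
          · linarith
      · -- τ > 0 : Taylor-type bound gives f τ < f 0
        have hle : ∀ t ∈ Set.Icc (0:ℝ) τ, f t ≤ f 0 := by
          intro t ht
          have hs0 : 0 ≤ t / τ := div_nonneg ht.1 (le_of_lt h0)
          have hs1 : t / τ ≤ 1 := (div_le_one h0).mpr ht.2
          have hcomb := hfconv.2 (Set.mem_univ (0:ℝ)) (Set.mem_univ τ)
            (by linarith : (0:ℝ) ≤ 1 - t / τ) hs0 (by ring)
          have harg : (1 - t / τ) • (0:ℝ) + (t / τ) • τ = t := by
            field_simp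
            simp only [smul_eq_mul, mul_zero, zero_add]
            exact div_mul_cancel₀ t h0.ne'
          rw [harg] at hcomb
          have hτle : f τ ≤ f 0 := hτT.2
          simp only [smul_eq_mul] at hcomb
          nlinarith [hcomb, mul_nonneg hs0 (sub_nonneg.mpr hτle)]
        have hψle : ∀ t ∈ Set.Icc (0:ℝ) τ,
            iteratedFDeriv ℝ 2 L (w + t • v) ![v, v] ≤ c * η * a := by
          intro t ht
          have h1 := hhess (w + t • v) v
          have hNv : Nrm v ^ 2 = η ^ 2 * a := by
            rw [hv, hNsmul, abs_of_pos hηpos]; ring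
          rw [hNv] at h1
          have h2 : f t ≤ f 0 := hle t ht
          have h3 : L (w + t • v) = f t := rfl
          rw [h3] at h1
          have h4 : 0 ≤ (f 0 - f t) * (B ^ 2 * (η ^ 2 * a)) := by
            apply mul_nonneg (by linarith) (by positivity)
          have h5 : B ^ 2 * f 0 * (η ^ 2 * a) = c * η * a := by
            rw [hf0]
            linear_combination (η * a) * hcB
          nlinarith [h1, h4, h5]
        set K := c * η * a with hK
        set g1 : ℝ → ℝ := fun t => φ 0 + K * t - φ t with hg1
        set g : ℝ → ℝ := fun t => f 0 + φ 0 * t + K * t ^ 2 / 2 - f t with hg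
        have hg1' : ∀ t, HasDerivAt g1
            (K - iteratedFDeriv ℝ 2 L (w + t • v) ![v, v]) t := fun t => by
          have h := ((hasDerivAt_const t (φ 0)).add ((hasDerivAt_id t).const_mul K)).sub (hφ' t)
          exact h.congr_deriv (by ring)
        have hg' : ∀ t, HasDerivAt g (g1 t) t := fun t => by
          have hsq : HasDerivAt (fun s : ℝ => K * s ^ 2 / 2) (K * t) t := by
            have h := ((hasDerivAt_pow 2 t).const_mul K).div_const 2
            refine h.congr_deriv ?_
            push_cast
            ring
          have hlin : HasDerivAt (fun s : ℝ => f 0 + φ 0 * s) (φ 0) t := by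
            simpa using ((hasDerivAt_id t).const_mul (φ 0)).const_add (f 0)
          exact (hlin.add hsq).sub (hf' t)
        have hφcont : Continuous φ := by
          have : Differentiable ℝ φ := fun t => (hφ' t).differentiableAt
          exact this.continuous
        have hmono1 : MonotoneOn g1 (Set.Icc 0 τ) := by
          apply monotoneOn_of_deriv_nonneg (convex_Icc 0 τ)
          · exact Continuous.continuousOn (by
              exact (continuous_const.add (continuous_const.mul continuous_id)).sub hφcont)
          · intro t _
            exact ((hg1' t).differentiableAt).differentiableWithinAt
          · intro t ht
            rw [interior_Icc] at ht
            rw [(hg1' t).deriv]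
            have := hψle t (Set.Ioo_subset_Icc_self ht)
            linarith
        have hg1nonneg : ∀ t ∈ Set.Icc (0:ℝ) τ, 0 ≤ g1 t := by
          intro t ht
          have h0' : g1 0 = 0 := by simp [hg1]
          have := hmono1 ⟨le_refl 0, le_of_lt h0⟩ ht ht.1
          linarith
        have hmono : MonotoneOn g (Set.Icc 0 τ) := by
          apply monotoneOn_of_deriv_nonneg (convex_Icc 0 τ)
          · exact Continuous.continuousOn (by
              exact ((continuous_const.add (continuous_const.mul continuous_id)).add
                ((continuous_const.mul (continuous_pow 2)).div_const 2)).sub hfc)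
          · intro t _
            exact ((hg' t).differentiableAt).differentiableWithinAt
          · intro t ht
            rw [interior_Icc] at ht
            rw [(hg' t).deriv]
            exact hg1nonneg t (Set.Ioo_subset_Icc_self ht)
        have hgτ : 0 ≤ g τ := by
          have h0' : g 0 = 0 := by simp [hg]
          have := hmono ⟨le_refl 0, le_of_lt h0⟩ ⟨le_of_lt h0, le_refl τ⟩ (le_of_lt h0)
          linarith
        have hfτ : f τ < f 0 := by
          have h1 : f τ ≤ f 0 + φ 0 * τ + K * τ ^ 2 / 2 := by
            simp only [hg] at hgτ; linarith
          rw [hφ0, hK] at h1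
          have hsqrt2 : Real.sqrt 2 < 2 := by
            nlinarith [Real.sq_sqrt (by norm_num : (0:ℝ) ≤ 2), Real.sqrt_nonneg 2]
          have hcτ : c * τ < 2 := by nlinarith
          have hpos : 0 < η * a * τ * (2 - c * τ) := by
            apply mul_pos (by positivity) (by linarith)
          nlinarith [h1, hpos]
        have hU : ∀ᶠ t in 𝓝[>] τ, f t < f 0 := by
          have hmem : {t | f t < f 0} ∈ 𝓝 τ :=
            (isOpen_lt hfc continuous_const).mem_nhds hfτ
          exact eventually_nhdsWithin_of_eventually_nhds (eventually_of_mem hmem (fun x hx => hx))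
        have h2 : Set.Ioc τ 1 ∈ 𝓝[>] τ := Ioc_mem_nhdsGT_of_mem ⟨le_refl τ, hτlt⟩
        obtain ⟨t, ht1, ht2⟩ := (hU.and (eventually_of_mem h2 (fun x hx => hx))).exists
        exact ⟨t, ht2.1, ht2.2, le_of_lt ht1⟩
    obtain ⟨t, ht1, ht2, ht3⟩ := key
    have : t ∈ T := ⟨⟨le_trans hτ0 (le_of_lt ht1), ht2⟩, ht3⟩
    exact absurd (le_csSup hTbdd this) (not_le.mpr ht1)
  have h1T : (1:ℝ) ∈ T := hτeq ▸ hτT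
  have := h1T.2
  rw [hf0] at this
  simpa [hf, hv] using this


end
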